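/- Let L be a positive integer, let m be a positive integer, let H be a real m×L matrix, let P > 0, and let A be an L×L matrix with integer entries and det A ≠ 0, with columns a₁,…,a_L ∈ ℤ^L. Then Σ_{i=1}^{L} ( −(1/2)·log₂( aᵢᵀ(I_L + P·HᵀH)⁻¹aᵢ ) ) ≤ (1/2)·log₂ det(I_L + P·HᵀH). In other words, the sum of the compute-and-forward computation rates of L linearly independent integer equations never exceeds the multiple access channel sum capacity. -/

import Mathlib

open Matrix

/-- Hadamard's inequality, squared form: `(det T)² ≤ ∏ᵢ ∑ⱼ T j i²`. -/
lemma hadamard_sq {L : ℕ} (T : Matrix (Fin L) (Fin L) ℝ) :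
    T.det ^ 2 ≤ ∏ i : Fin L, ∑ j : Fin L, (T j i) ^ 2 := by
  haveI : Fact (Module.finrank ℝ (EuclideanSpace ℝ (Fin L)) = L) :=
    ⟨finrank_euclideanSpace_fin⟩
  set b := EuclideanSpace.basisFun (Fin L) ℝ with hb
  set o := b.toBasis.orientation with ho
  set v : Fin L → EuclideanSpace ℝ (Fin L) :=
    fun i => (WithLp.equiv 2 _).symm (fun j => T j i) with hv
  have h2 : b.toBasis.det v = T.det := by
    rw [Module.Basis.det_apply]
    have : b.toBasis.toMatrix v = T := by
      ext i j
      simp [Module.Basis.toMatrix_apply, hb, hv, EuclideanSpace.basisFun_repr]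
    rw [this]
  have h1 : |T.det| = |o.volumeForm v| := by
    rw [o.volumeForm_robust' b v, h2]
  have h3 : |T.det| ≤ ∏ i : Fin L, ‖v i‖ := h1 ▸ o.abs_volumeForm_apply_le v
  have h4 : ∀ i, ‖v i‖ ^ 2 = ∑ j : Fin L, (T j i) ^ 2 := by
    intro i
    rw [EuclideanSpace.norm_eq, Real.sq_sqrt (by positivity)]
    simp [hv, sq_abs]
  calc T.det ^ 2 = |T.det| ^ 2 := (sq_abs _).symm
    _ ≤ (∏ i : Fin L, ‖v i‖) ^ 2 := by
        exact pow_le_pow_left₀ (abs_nonneg _) h3 2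
    _ = ∏ i : Fin L, ‖v i‖ ^ 2 := by rw [Finset.prod_pow]
    _ = ∏ i : Fin L, ∑ j : Fin L, (T j i) ^ 2 := by
        exact Finset.prod_congr rfl fun i _ => h4 i

theorem stmt6 (L m : ℕ) (hL : 0 < L) (hm : 0 < m)
    (H : Matrix (Fin m) (Fin L) ℝ) (P : ℝ) (hP : 0 < P)
    (A : Matrix (Fin L) (Fin L) ℤ) (hA : A.det ≠ 0) :
    ∑ i : Fin L,
        (-((1/2) * Real.logb 2
          ((fun j => (A j i : ℝ)) ⬝ᵥ
            (((1 : Matrix (Fin L) (Fin L) ℝ) + P • (Hᵀ * H))⁻¹ *ᵥ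
              fun j => (A j i : ℝ)))))
      ≤ (1/2) * Real.logb 2 ((1 : Matrix (Fin L) (Fin L) ℝ) + P • (Hᵀ * H)).det := by
  set M : Matrix (Fin L) (Fin L) ℝ := (1 : Matrix (Fin L) (Fin L) ℝ) + P • (Hᵀ * H) with hMdef
  -- positive definiteness of M
  have hPS : (P • (Hᵀ * H)).PosSemidef := by
    have h0 := Matrix.posSemidef_conjTranspose_mul_self H
    rw [show Hᴴ = Hᵀ from rfl] at h0
    refine Matrix.PosSemidef.of_dotProduct_mulVec_nonneg ?_ (fun x => ?_)
    · unfold Matrix.IsHermitian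
      rw [conjTranspose_smul, h0.1]
      simp
    · rw [smul_mulVec, dotProduct_smul, smul_eq_mul]
      exact mul_nonneg hP.le (h0.dotProduct_mulVec_nonneg x)
  have hM : M.PosDef := Matrix.PosDef.add_posSemidef Matrix.PosDef.one hPS
  have hMdet : 0 < M.det := hM.det_pos
  have hW : (M⁻¹).PosDef := hM.inv
  -- the real matrix B with columns bᵢ
  set B : Matrix (Fin L) (Fin L) ℝ := A.map (Int.cast : ℤ → ℝ) with hBdef
  have hBdet : B.det = (A.det : ℝ) := by
    have := RingHom.map_det (Int.castRingHom ℝ) A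
    simpa [hBdef] using this.symm
  have hBdet1 : 1 ≤ B.det ^ 2 := by
    rw [hBdet, ← Int.cast_pow]
    have h1 : (1 : ℤ) ≤ |A.det| := Int.one_le_abs hA
    have : (1 : ℤ) ≤ A.det ^ 2 := by nlinarith [abs_nonneg A.det, sq_abs A.det]
    exact_mod_cast this
  set q : Fin L → ℝ := fun i =>
    (fun j => (A j i : ℝ)) ⬝ᵥ (M⁻¹ *ᵥ fun j => (A j i : ℝ)) with hq
  -- square root of M⁻¹
  set R : Matrix (Fin L) (Fin L) ℝ := (open scoped MatrixOrder in CFC.sqrt (M⁻¹)) with hR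
  have hRps : R.PosSemidef :=
    open scoped MatrixOrder in Matrix.nonneg_iff_posSemidef.mp (CFC.sqrt_nonneg (M⁻¹))
  have hRR : R * R = M⁻¹ :=
    open scoped MatrixOrder in CFC.sqrt_mul_sqrt_self (M⁻¹) hW.posSemidef.nonneg
  set T : Matrix (Fin L) (Fin L) ℝ := R * B with hT
  -- q i = ∑ j, (T j i)^2
  have hqT : ∀ i, q i = ∑ j : Fin L, (T j i) ^ 2 := by
    intro i
    have hcol : ∀ j, T j i = (R *ᵥ fun k => (A k i : ℝ)) j := by
      intro j
      simp [hT, hBdef, Matrix.mul_apply, Matrix.mulVec, dotProduct, Matrix.map_apply]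
    have : ∑ j : Fin L, (T j i) ^ 2
        = (R *ᵥ fun k => (A k i : ℝ)) ⬝ᵥ (R *ᵥ fun k => (A k i : ℝ)) := by
      simp only [hcol, dotProduct, sq]
    have hRsymm : Rᵀ = R := hRps.1
    rw [this, dotProduct_mulVec, ← Matrix.mulVec_transpose,
      Matrix.mulVec_mulVec, hRsymm, hRR, dotProduct_comm]
  have hqpos : ∀ i, 0 < q i := by
    intro i
    apply hW.dotProduct_mulVec_pos
    intro hcontr
    apply hA
    have : B.det = 0 := by
      apply Matrix.det_eq_zero_of_column_eq_zero i
      intro j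
      show B j i = 0
      exact congrFun hcontr j
    rw [hBdet] at this
    exact_mod_cast this
  -- key: ∏ q i ≥ 1 / det M
  have hdetT : T.det ^ 2 = B.det ^ 2 / M.det := by
    have : T.det ^ 2 = (R.det)^2 * B.det ^ 2 := by
      rw [hT, Matrix.det_mul]; ring
    rw [this]
    have hRdet : R.det ^ 2 = (M.det)⁻¹ := by
      rw [sq, ← Matrix.det_mul, hRR, Matrix.det_nonsing_inv, Ring.inverse_eq_inv']
    rw [hRdet]; field_simp
  have hprod : (M.det)⁻¹ ≤ ∏ i : Fin L, q i := by
    have h1 : (M.det)⁻¹ ≤ T.det ^ 2 := by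
      rw [hdetT, inv_eq_one_div]
      gcongr
    have h2 := hadamard_sq T
    calc (M.det)⁻¹ ≤ T.det ^ 2 := h1
      _ ≤ ∏ i : Fin L, ∑ j : Fin L, (T j i) ^ 2 := h2
      _ = ∏ i : Fin L, q i := by
          exact Finset.prod_congr rfl fun i _ => (hqT i).symm
  -- conclude with logs
  have hsum : ∑ i : Fin L, (-((1/2) * Real.logb 2 (q i)))
      = -((1/2) * Real.logb 2 (∏ i : Fin L, q i)) := by
    rw [Real.logb_prod _ _ (fun i _ => (hqpos i).ne'), Finset.mul_sum,
      ← Finset.sum_neg_distrib]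
  show ∑ i : Fin L, (-((1/2) * Real.logb 2 (q i))) ≤ (1/2) * Real.logb 2 M.det
  rw [hsum]
  have hppos : 0 < ∏ i : Fin L, q i := Finset.prod_pos fun i _ => hqpos i
  have hlog : Real.logb 2 (M.det)⁻¹ ≤ Real.logb 2 (∏ i : Fin L, q i) :=
    Real.logb_le_logb_of_le (by norm_num) (by positivity) hprod
  rw [Real.logb_inv] at hlog
  linarith
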